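/- Let ν > 1 and 1/ν + 1/ν² < F < 2, and set H_R := 1/ν², H_s := (F ν²/(ν+1))^{2/3} H_R, H_* := (−ν−1+√(8F²ν⁴+ν²+2ν+1)) H_R/(2(ν+1)). Then H_R < H_s < H_* < 1. -/

import Mathlib

open Real

/-- In the discontinuous-profile regime `1/ν + 1/ν² < F < 2` one has
`H_R < H_s < H_* < 1`. -/
theorem HR_lt_Hs_lt_Hstar_lt_one (F nu : ℝ) (hnu : 1 < nu)
    (hFlow : 1 / nu + 1 / nu ^ 2 < F) (hF2 : F < 2) :
    let HR := 1 / nu ^ 2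
    let Hs := (F * nu ^ 2 / (nu + 1)) ^ ((2 : ℝ) / 3) * HR
    let Hstar := (-nu - 1 + Real.sqrt (8 * F ^ 2 * nu ^ 4 + nu ^ 2 + 2 * nu + 1)) * HR /
      (2 * (nu + 1))
    HR < Hs ∧ Hs < Hstar ∧ Hstar < 1 := by
  intro HR Hs Hstar
  have hnu0 : (0:ℝ) < nu := lt_trans one_pos hnu
  have hnup1 : (0:ℝ) < nu + 1 := by linarith
  have hnu2 : (0:ℝ) < nu ^ 2 := by positivity
  set a : ℝ := F * nu ^ 2 / (nu + 1) with ha_def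
  have hFnu : nu + 1 < F * nu ^ 2 := by
    have h : (1 / nu + 1 / nu ^ 2) * nu ^ 2 = nu + 1 := by field_simp
    nlinarith [mul_lt_mul_of_pos_right hFlow hnu2]
  have ha1 : 1 < a := by
    rw [ha_def, lt_div_iff₀ hnup1]
    linarith
  have ha0 : (0:ℝ) < a := lt_trans one_pos ha1
  have haF : a * (nu + 1) = F * nu ^ 2 := by
    rw [ha_def, div_mul_cancel₀ _ hnup1.ne']
  set t : ℝ := a ^ ((2:ℝ)/3) with ht_def
  have ht1 : 1 < t := by
    rw [ht_def]
    exact Real.one_lt_rpow_iff_of_pos ha0 |>.mpr (Or.inl ⟨ha1, by norm_num⟩)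
  have ht0 : (0:ℝ) < t := lt_trans one_pos ht1
  have ht3 : t ^ (3:ℕ) = a ^ (2:ℕ) := by
    rw [ht_def, ← Real.rpow_natCast (a ^ ((2:ℝ)/3)) 3, ← Real.rpow_mul ha0.le]
    norm_num
  have hF24 : F ^ 2 * nu ^ 4 = t ^ 3 * (nu + 1) ^ 2 := by
    have h := congrArg (· ^ 2) haF
    nlinarith [ht3, h]
  have hHRpos : (0:ℝ) < HR := by simp only [HR]; positivity
  refine ⟨?_, ?_, ?_⟩
  · show HR < t * HR
    exact (lt_mul_iff_one_lt_left hHRpos).mpr ht1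
  · -- Hs < Hstar
    have hkey : 2 * (nu + 1) * t + nu + 1 <
        Real.sqrt (8 * F ^ 2 * nu ^ 4 + nu ^ 2 + 2 * nu + 1) := by
      have hL0 : (0:ℝ) ≤ 2 * (nu + 1) * t + nu + 1 := by positivity
      rw [show (8 * F ^ 2 * nu ^ 4 + nu ^ 2 + 2 * nu + 1 : ℝ) =
          8 * (F ^ 2 * nu ^ 4) + nu ^ 2 + 2 * nu + 1 by ring,
        hF24, ← Real.sqrt_sq hL0]
      apply Real.sqrt_lt_sqrt (by positivity)
      -- (2(ν+1)t + ν + 1)^2 < 8 t^3 (ν+1)^2 + ν^2 + 2ν + 1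
      nlinarith [mul_pos (mul_pos ht0 (show (0:ℝ) < 2*t+1 by linarith))
        (show (0:ℝ) < t - 1 by linarith), sq_nonneg (nu + 1),
        mul_pos (mul_pos (mul_pos ht0 (show (0:ℝ) < 2*t+1 by linarith))
          (show (0:ℝ) < t - 1 by linarith)) (show (0:ℝ) < (nu+1)^2 by positivity)]
    show t * HR < (-nu - 1 + Real.sqrt (8 * F ^ 2 * nu ^ 4 + nu ^ 2 + 2 * nu + 1)) * HR /
      (2 * (nu + 1))
    rw [lt_div_iff₀ (by positivity : (0:ℝ) < 2 * (nu + 1))]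
    have h2 : t * (2 * (nu + 1)) < -nu - 1 +
        Real.sqrt (8 * F ^ 2 * nu ^ 4 + nu ^ 2 + 2 * nu + 1) := by linarith
    calc t * HR * (2 * (nu + 1)) = (t * (2 * (nu + 1))) * HR := by ring
      _ < (-nu - 1 + Real.sqrt (8 * F ^ 2 * nu ^ 4 + nu ^ 2 + 2 * nu + 1)) * HR :=
        mul_lt_mul_of_pos_right h2 hHRpos
  · -- Hstar < 1
    have hFpos : (0:ℝ) < F := by
      have : (0:ℝ) < 1 / nu + 1 / nu ^ 2 := by positivity
      linarith
    have hS : Real.sqrt (8 * F ^ 2 * nu ^ 4 + nu ^ 2 + 2 * nu + 1) <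
        2 * nu ^ 3 + 2 * nu ^ 2 + nu + 1 := by
      rw [Real.sqrt_lt' (by positivity)]
      have hF4 : F ^ 2 < 4 := by nlinarith
      have h32 : 8 * F ^ 2 * nu ^ 4 < 32 * nu ^ 4 := by nlinarith [pow_pos hnu0 4]
      have h8 : 8 * nu ^ 2 ≤ (nu ^ 2 + 1) * (nu + 1) ^ 2 := by
        nlinarith [mul_nonneg (sq_nonneg (nu - 1)) (by positivity : (0:ℝ) ≤ nu ^ 2 + 4 * nu + 1)]
      have h8' : 4 * nu ^ 2 * (8 * nu ^ 2) ≤ 4 * nu ^ 2 * ((nu ^ 2 + 1) * (nu + 1) ^ 2) :=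
        mul_le_mul_of_nonneg_left h8 (by positivity)
      nlinarith [h32, h8']
    show (-nu - 1 + Real.sqrt (8 * F ^ 2 * nu ^ 4 + nu ^ 2 + 2 * nu + 1)) * HR /
      (2 * (nu + 1)) < 1
    rw [div_lt_one (by positivity : (0:ℝ) < 2 * (nu + 1))]
    have hHR : HR = 1 / nu ^ 2 := rfl
    rw [hHR]
    rw [mul_one_div, div_lt_iff₀ hnu2]
    have hid : 2 * (nu + 1) * nu ^ 2 = 2 * nu ^ 3 + 2 * nu ^ 2 := by ring
    linarith [hS]
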